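/- Let (X,b) be a locally finite weighted graph all of whose connected components are infinite, and let V : X → ℝ be a potential such that the quadratic form q_V is nonnegative on C_c(X) or the quadratic form q_{-V-2deg} is nonnegative on C_c(X). Then the Schrödinger operator L_V : C(X) → C(X), L_V f(x) = ∑_{y∈X} b(x,y)(f(x)-f(y)) + V(x)f(x), is surjective. -/

import Mathlib

/-- The quadratic form `q_V(f) = (1/2)∑_{x,y} b(x,y)|f x - f y|² + ∑_x V(x)|f x|²`
associated with a weighted graph `b` and a potential `V`. -/
noncomputable def qForm {X : Type*} (b : X → X → ℝ) (V : X → ℝ) (f : X → ℂ) : ℝ :=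
  (1 / 2) * ∑' x, ∑' y, b x y * ‖f x - f y‖ ^ 2 + ∑' x, V x * ‖f x‖ ^ 2

/-- The (weighted) degree `deg(x) = ∑_y b(x,y)` of a vertex. -/
noncomputable def degree {X : Type*} (b : X → X → ℝ) (x : X) : ℝ := ∑' y, b x y

namespace SchroedingerAux

variable {X : Type*}

lemma sum_congr_sets {M : Type*} [AddCommMonoid M] {s t : Finset X} (F : X → M)
    (hs : ∀ y ∈ s, y ∉ t → F y = 0) (ht : ∀ y ∈ t, y ∉ s → F y = 0) :
    ∑ y ∈ s, F y = ∑ y ∈ t, F y := by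
  classical
  have h1 : ∑ y ∈ s ∩ t, F y = ∑ y ∈ s, F y :=
    Finset.sum_subset Finset.inter_subset_left (fun y hy hny =>
      hs y hy (fun h => hny (Finset.mem_inter.mpr ⟨hy, h⟩)))
  have h2 : ∑ y ∈ s ∩ t, F y = ∑ y ∈ t, F y :=
    Finset.sum_subset Finset.inter_subset_right (fun y hy hny =>
      ht y hy (fun h => hny (Finset.mem_inter.mpr ⟨h, hy⟩)))
  rw [← h1, h2]

lemma sum_sum_mul_right_eq (b : X → X → ℝ) (hsym : ∀ x y, b x y = b y x) (T : Finset X)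
    (g : X → ℝ) :
    ∑ x ∈ T, ∑ y ∈ T, b x y * g y = ∑ x ∈ T, ∑ y ∈ T, b x y * g x := by
  rw [Finset.sum_comm]
  exact Finset.sum_congr rfl fun x _ => Finset.sum_congr rfl fun y _ => by rw [hsym]

lemma sum_split3 {s : Finset X} (f g h : X → ℝ) :
    ∑ x ∈ s, (f x + g x + h x) = (∑ x ∈ s, f x) + (∑ x ∈ s, g x) + ∑ x ∈ s, h x := by
  rw [Finset.sum_add_distrib, Finset.sum_add_distrib]

lemma sum_sum_const_mul (T : Finset X) (c : ℝ) (F : X → X → ℝ) :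
    ∑ x ∈ T, ∑ y ∈ T, c * F x y = c * ∑ x ∈ T, ∑ y ∈ T, F x y := by
  rw [Finset.mul_sum]
  exact Finset.sum_congr rfl fun x _ => by rw [Finset.mul_sum]

variable (b : X → X → ℝ) (V : X → ℝ)

noncomputable def Nfin (hlf : ∀ x, {y | b x y ≠ 0}.Finite) (x : X) : Finset X :=
  (hlf x).toFinset

lemma mem_Nfin {hlf : ∀ x, {y | b x y ≠ 0}.Finite} {x y : X} :
    y ∈ Nfin b hlf x ↔ b x y ≠ 0 := by simp [Nfin]

noncomputable def Lr (hlf : ∀ x, {y | b x y ≠ 0}.Finite) (u : X → ℝ) (x : X) : ℝ :=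
  (∑ y ∈ Nfin b hlf x, b x y * (u x - u y)) + V x * u x

noncomputable def Qf (P : X → ℝ) (T : Finset X) (u : X → ℝ) : ℝ :=
  (1/2) * ∑ x ∈ T, ∑ y ∈ T, b x y * (u x - u y)^2 + ∑ x ∈ T, P x * u x^2

noncomputable def Bf (P : X → ℝ) (T : Finset X) (u v : X → ℝ) : ℝ :=
  (1/2) * ∑ x ∈ T, ∑ y ∈ T, b x y * ((u x - u y) * (v x - v y)) + ∑ x ∈ T, P x * (u x * v x)

lemma qForm_eq_Qf (hsym : ∀ x y, b x y = b y x) (hlf : ∀ x, {y | b x y ≠ 0}.Finite)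
    (P : X → ℝ) (T : Finset X) (u : X → ℝ)
    (hT1 : ∀ x, u x ≠ 0 → x ∈ T)
    (hT2 : ∀ x y, u x ≠ 0 → b x y ≠ 0 → y ∈ T) :
    qForm b P (fun x => (u x : ℂ)) = Qf b P T u := by
  unfold qForm Qf
  have hns : ∀ r s : ℝ, ‖(r:ℂ) - (s:ℂ)‖^2 = (r - s)^2 := by
    intro r s
    rw [← Complex.ofReal_sub, Complex.norm_real, Real.norm_eq_abs, sq_abs]
  have hn1 : ∀ r : ℝ, ‖(r:ℂ)‖^2 = r^2 := fun r => by rw [Complex.norm_real, Real.norm_eq_abs, sq_abs]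
  have hin : ∀ x, (∑' y, b x y * ‖((u x : ℂ)) - (u y : ℂ)‖^2)
      = ∑ y ∈ Nfin b hlf x, b x y * (u x - u y)^2 := by
    intro x
    have he : (fun y => b x y * ‖((u x : ℂ)) - (u y : ℂ)‖^2)
        = fun y => b x y * (u x - u y)^2 := by
      funext y; rw [hns]
    rw [he]
    exact tsum_eq_sum (fun y hy => by
      have hb : b x y = 0 := by
        by_contra hb; exact hy (mem_Nfin b |>.mpr hb)
      rw [hb, zero_mul])
  have houter : ∑' x, ∑' y, b x y * ‖((u x : ℂ)) - ((u y : ℂ))‖^2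
      = ∑ x ∈ T, ∑ y ∈ T, b x y * (u x - u y)^2 := by
    rw [tsum_congr hin]
    rw [tsum_eq_sum (s := T) (fun x hx => Finset.sum_eq_zero (fun y hy => by
      have hux : u x = 0 := by by_contra h; exact hx (hT1 x h)
      have hby : b x y ≠ 0 := mem_Nfin b |>.mp hy
      by_cases huy : u y = 0
      · rw [hux, huy]; ring
      · exact absurd (hT2 y x huy (by rwa [← hsym x y])) hx))]
    refine Finset.sum_congr rfl fun x hx => ?_
    apply sum_congr_sets
    · intro y hy hyT
      have hby : b x y ≠ 0 := mem_Nfin b |>.mp hy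
      by_cases hux : u x = 0
      · have huy : u y = 0 := by by_contra h; exact hyT (hT1 y h)
        rw [hux, huy]; ring
      · exact absurd (hT2 x y hux hby) hyT
    · intro y _ hyN
      have hb : b x y = 0 := by by_contra h; exact hyN (mem_Nfin b |>.mpr h)
      rw [hb, zero_mul]
  have hpot : ∑' x, P x * ‖((u x : ℂ))‖^2 = ∑ x ∈ T, P x * u x^2 := by
    have he : (fun x => P x * ‖((u x : ℂ))‖^2) = fun x => P x * u x^2 := by
      funext x; rw [hn1]
    rw [he]
    exact tsum_eq_sum (fun x hx => by
      have hux : u x = 0 := by by_contra h; exact hx (hT1 x h)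
      rw [hux]; ring)
  rw [houter, hpot]

lemma sum_mul_Lr (hsym : ∀ x y, b x y = b y x) (hlf : ∀ x, {y | b x y ≠ 0}.Finite)
    (T : Finset X) (u : X → ℝ)
    (hT1 : ∀ x, u x ≠ 0 → x ∈ T)
    (hT2 : ∀ x y, u x ≠ 0 → b x y ≠ 0 → y ∈ T) :
    ∑ x ∈ T, u x * Lr b V hlf u x = Qf b V T u := by
  have step1 : ∀ x ∈ T, u x * Lr b V hlf u x
      = (∑ y ∈ T, b x y * ((u x - u y) * u x)) + V x * u x^2 := by
    intro x _
    by_cases hux : u x = 0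
    · rw [hux]
      simp
    · unfold Lr
      rw [mul_add]
      have h1 : u x * ∑ y ∈ Nfin b hlf x, b x y * (u x - u y)
          = ∑ y ∈ T, b x y * ((u x - u y) * u x) := by
        rw [Finset.mul_sum]
        rw [Finset.sum_congr rfl (fun y _ => by ring :
          ∀ y ∈ Nfin b hlf x, u x * (b x y * (u x - u y)) = b x y * ((u x - u y) * u x))]
        apply sum_congr_sets
        · intro y hy hyT
          exact absurd (hT2 x y hux (mem_Nfin b |>.mp hy)) hyT
        · intro y _ hyN
          have hb : b x y = 0 := by by_contra h; exact hyN (mem_Nfin b |>.mpr h)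
          rw [hb, zero_mul]
      rw [h1]
      congr 1
      ring
  rw [Finset.sum_congr rfl step1, Finset.sum_add_distrib]
  unfold Qf
  have hswap := sum_sum_mul_right_eq b hsym T (fun x => u x ^ 2)
  have hsplit1 : ∑ x ∈ T, ∑ y ∈ T, b x y * (u x - u y)^2
      = (∑ x ∈ T, ∑ y ∈ T, b x y * u x^2) + (∑ x ∈ T, ∑ y ∈ T, b x y * u y^2)
        + ∑ x ∈ T, ∑ y ∈ T, (-2) * (b x y * (u x * u y)) := by
    rw [← sum_split3]
    refine Finset.sum_congr rfl fun x _ => ?_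
    rw [← sum_split3]
    exact Finset.sum_congr rfl fun y _ => by ring
  have hsplit2 : ∑ x ∈ T, ∑ y ∈ T, b x y * ((u x - u y) * u x)
      = (∑ x ∈ T, ∑ y ∈ T, b x y * u x^2) + (∑ x ∈ T, ∑ y ∈ T, (-1) * (b x y * (u x * u y)))
        + ∑ x ∈ T, ∑ y ∈ T, (0:ℝ) := by
    rw [← sum_split3]
    refine Finset.sum_congr rfl fun x _ => ?_
    rw [← sum_split3]
    exact Finset.sum_congr rfl fun y _ => by ring
  have hM := sum_sum_const_mul T (-2) (fun x y => b x y * (u x * u y))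
  have hM1 := sum_sum_const_mul T (-1) (fun x y => b x y * (u x * u y))
  have hz : ∑ x ∈ T, ∑ y ∈ T, (0:ℝ) = 0 := by simp
  linarith [hswap, hsplit1, hsplit2, hM, hM1, hz]

lemma Qf_expand (P : X → ℝ) (T : Finset X) (u v : X → ℝ) (t : ℝ) :
    Qf b P T (fun x => u x + t * v x)
      = Qf b P T u + 2*t*Bf b P T u v + t^2 * Qf b P T v := by
  unfold Qf Bf
  have hd : ∑ x ∈ T, ∑ y ∈ T, b x y * ((u x + t*v x) - (u y + t*v y))^2
      = (∑ x ∈ T, ∑ y ∈ T, b x y * (u x - u y)^2)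
        + (∑ x ∈ T, ∑ y ∈ T, (2*t) * (b x y * ((u x - u y)*(v x - v y))))
        + ∑ x ∈ T, ∑ y ∈ T, (t^2) * (b x y * (v x - v y)^2) := by
    rw [← sum_split3]
    refine Finset.sum_congr rfl fun x _ => ?_
    rw [← sum_split3]
    exact Finset.sum_congr rfl fun y _ => by ring
  have hp : ∑ x ∈ T, P x * (u x + t*v x)^2
      = (∑ x ∈ T, P x * u x^2) + (∑ x ∈ T, (2*t) * (P x * (u x * v x)))
        + ∑ x ∈ T, (t^2) * (P x * v x^2) := by
    rw [← sum_split3]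
    exact Finset.sum_congr rfl fun x _ => by ring
  have h1 := sum_sum_const_mul T (2*t) (fun x y => b x y * ((u x - u y)*(v x - v y)))
  have h2 := sum_sum_const_mul T (t^2) (fun x y => b x y * (v x - v y)^2)
  have h3 : ∑ x ∈ T, (2*t) * (P x * (u x * v x)) = (2*t) * ∑ x ∈ T, P x * (u x * v x) :=
    (Finset.mul_sum _ _ _).symm
  have h4 : ∑ x ∈ T, (t^2) * (P x * v x^2) = (t^2) * ∑ x ∈ T, P x * v x^2 :=
    (Finset.mul_sum _ _ _).symm
  rw [hd, hp, h1, h2, h3, h4]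
  ring

lemma Bf_indicator [DecidableEq X] (hsym : ∀ x y, b x y = b y x)
    (P : X → ℝ) (T : Finset X) (u : X → ℝ) (x₀ : X)
    (hx₀ : x₀ ∈ T) (hu0 : u x₀ = 0) :
    Bf b P T u (fun y => if y = x₀ then 1 else 0) = -∑ y ∈ T, b x₀ y * u y := by
  unfold Bf
  have hpot : ∑ x ∈ T, P x * (u x * (if x = x₀ then (1:ℝ) else 0)) = 0 := by
    have he : ∀ x ∈ T, P x * (u x * (if x = x₀ then (1:ℝ) else 0))
        = if x = x₀ then P x * u x else 0 := by
      intro x _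
      split_ifs <;> ring
    rw [Finset.sum_congr rfl he, Finset.sum_ite_eq' T x₀ (fun x => P x * u x), if_pos hx₀,
      hu0, mul_zero]
  have hsub : ∑ x ∈ T, ∑ y ∈ T, b x y * ((u x - u y) *
        ((if x = x₀ then (1:ℝ) else 0) - (if y = x₀ then 1 else 0)))
      = (∑ x ∈ T, ∑ y ∈ T, b x y * ((u x - u y) * (if x = x₀ then (1:ℝ) else 0)))
        - ∑ x ∈ T, ∑ y ∈ T, b x y * ((u x - u y) * (if y = x₀ then (1:ℝ) else 0)) := by
    rw [← Finset.sum_sub_distrib]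
    refine Finset.sum_congr rfl fun x _ => ?_
    rw [← Finset.sum_sub_distrib]
    exact Finset.sum_congr rfl fun y _ => by ring
  have hA : ∑ x ∈ T, ∑ y ∈ T, b x y * ((u x - u y) * (if x = x₀ then (1:ℝ) else 0))
      = -∑ y ∈ T, b x₀ y * u y := by
    have h1 : ∀ x ∈ T, ∑ y ∈ T, b x y * ((u x - u y) * (if x = x₀ then (1:ℝ) else 0))
        = if x = x₀ then ∑ y ∈ T, b x y * (u x - u y) else 0 := by
      intro x _
      by_cases h : x = x₀
      · simp only [if_pos h, mul_one]
      · simp only [if_neg h, mul_zero, Finset.sum_const_zero]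
    rw [Finset.sum_congr rfl h1, Finset.sum_ite_eq' T x₀ _, if_pos hx₀]
    rw [← Finset.sum_neg_distrib]
    exact Finset.sum_congr rfl fun y _ => by rw [hu0]; ring
  have hB : ∑ x ∈ T, ∑ y ∈ T, b x y * ((u x - u y) * (if y = x₀ then (1:ℝ) else 0))
      = ∑ y ∈ T, b x₀ y * u y := by
    rw [Finset.sum_comm]
    have h1 : ∀ y ∈ T, ∑ x ∈ T, b x y * ((u x - u y) * (if y = x₀ then (1:ℝ) else 0))
        = if y = x₀ then ∑ x ∈ T, b x y * (u x - u y) else 0 := by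
      intro y _
      by_cases h : y = x₀
      · simp only [if_pos h, mul_one]
      · simp only [if_neg h, mul_zero, Finset.sum_const_zero]
    rw [Finset.sum_congr rfl h1, Finset.sum_ite_eq' T x₀ _, if_pos hx₀]
    exact Finset.sum_congr rfl fun x _ => by rw [hu0, hsym]; ring
  rw [hsub, hA, hB, hpot]
  ring

lemma Qf_neg_potential (hsym : ∀ x y, b x y = b y x) (hlf : ∀ x, {y | b x y ≠ 0}.Finite)
    (T : Finset X) (w : X → ℝ)
    (hT2 : ∀ x y, w x ≠ 0 → b x y ≠ 0 → y ∈ T) :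
    Qf b (fun x => -V x - 2 * degree b x) T w
      = -((1/2) * ∑ x ∈ T, ∑ y ∈ T, b x y * (w x + w y)^2 + ∑ x ∈ T, V x * w x^2) := by
  have hdeg : ∀ x, w x ≠ 0 → degree b x = ∑ y ∈ T, b x y := by
    intro x hx
    unfold degree
    rw [tsum_eq_sum (s := Nfin b hlf x) (fun y hy => by
      by_contra h; exact hy (mem_Nfin b |>.mpr h))]
    apply sum_congr_sets
    · intro y hy hyT
      exact absurd (hT2 x y hx (mem_Nfin b |>.mp hy)) hyT
    · intro y _ hyN
      by_contra h; exact hyN (mem_Nfin b |>.mpr h)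
  have hpot : ∑ x ∈ T, (-V x - 2 * degree b x) * w x^2
      = -(∑ x ∈ T, V x * w x^2) - 2 * ∑ x ∈ T, ∑ y ∈ T, b x y * w x^2 := by
    have he : ∀ x ∈ T, (-V x - 2 * degree b x) * w x^2
        = -(V x * w x^2) - 2 * ∑ y ∈ T, b x y * w x^2 := by
      intro x _
      by_cases hx : w x = 0
      · simp [hx]
      · rw [hdeg x hx, ← Finset.sum_mul]
        ring
    rw [Finset.sum_congr rfl he, Finset.sum_sub_distrib, Finset.sum_neg_distrib]
    congr 1
    rw [Finset.mul_sum]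
  unfold Qf
  rw [hpot]
  have hswap := sum_sum_mul_right_eq b hsym T (fun x => w x ^ 2)
  have hsplit1 : ∑ x ∈ T, ∑ y ∈ T, b x y * (w x - w y)^2
      = (∑ x ∈ T, ∑ y ∈ T, b x y * w x^2) + (∑ x ∈ T, ∑ y ∈ T, b x y * w y^2)
        + ∑ x ∈ T, ∑ y ∈ T, (-2) * (b x y * (w x * w y)) := by
    rw [← sum_split3]
    refine Finset.sum_congr rfl fun x _ => ?_
    rw [← sum_split3]
    exact Finset.sum_congr rfl fun y _ => by ring
  have hsplit2 : ∑ x ∈ T, ∑ y ∈ T, b x y * (w x + w y)^2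
      = (∑ x ∈ T, ∑ y ∈ T, b x y * w x^2) + (∑ x ∈ T, ∑ y ∈ T, b x y * w y^2)
        + ∑ x ∈ T, ∑ y ∈ T, (2:ℝ) * (b x y * (w x * w y)) := by
    rw [← sum_split3]
    refine Finset.sum_congr rfl fun x _ => ?_
    rw [← sum_split3]
    exact Finset.sum_congr rfl fun y _ => by ring
  have hM := sum_sum_const_mul T (-2) (fun x y => b x y * (w x * w y))
  have hM2 := sum_sum_const_mul T 2 (fun x y => b x y * (w x * w y))
  linarith [hswap, hsplit1, hsplit2, hM, hM2]

lemma eq_zero_of_quadratic_nonneg' {B C : ℝ} (h : ∀ t : ℝ, 0 ≤ 2 * t * B + t ^ 2 * C) :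
    B = 0 := by
  by_contra hB
  set ε : ℝ := 1 / (|C| + 1) with hεdef
  have hd : (0:ℝ) < |C| + 1 := by positivity
  have hε : (0:ℝ) < ε := by positivity
  have h1 := h (-(B * ε))
  have hC : C ≤ |C| := le_abs_self C
  have hB2 : 0 < B ^ 2 := by positivity
  have h2 : 2 * (B^2 * ε) ≤ (B^2 * ε^2) * C := by nlinarith [h1]
  have h3 : (B^2 * ε^2) * C ≤ (B^2 * ε^2) * |C| := by nlinarith [sq_nonneg (B*ε)]
  have h4 : ε * |C| < 1 := by
    rw [hεdef, div_mul_eq_mul_div, one_mul, div_lt_one hd]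
    linarith
  nlinarith [mul_pos hB2 hε]

lemma exists_boundary_edge {r : X → X → Prop} {S : Set X} {a c : X}
    (h : Relation.ReflTransGen r a c) (ha : a ∈ S) (hc : c ∉ S) :
    ∃ u v, u ∈ S ∧ v ∉ S ∧ r u v := by
  revert hc
  induction h with
  | refl => exact fun hc => absurd ha hc
  | @tail m c hp hr ih =>
    intro hc
    by_cases hm : m ∈ S
    · exact ⟨m, c, hm, hc, hr⟩
    · exact ih hm

lemma key (hb0 : ∀ x, b x x = 0) (hbnn : ∀ x y, 0 ≤ b x y)
    (hsym : ∀ x y, b x y = b y x) (hlf : ∀ x, {y | b x y ≠ 0}.Finite)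
    (hinfcomp : ∀ x, {y | Relation.ReflTransGen (fun u v => 0 < b u v) x y}.Infinite)
    (hq : (∀ f : X → ℂ, {x | f x ≠ 0}.Finite → 0 ≤ qForm b V f) ∨
      (∀ f : X → ℂ, {x | f x ≠ 0}.Finite →
        0 ≤ qForm b (fun x => -V x - 2 * degree b x) f))
    (u : X → ℝ) (hufin : {x | u x ≠ 0}.Finite)
    (hLru : ∀ x, Lr b V hlf u x = 0) :
    ∀ z, u z = 0 := by
  classical
  by_contra hne
  push_neg at hne
  obtain ⟨z₀, hz₀⟩ := hne
  have hdiff := (hinfcomp z₀).diff hufin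
  obtain ⟨c, hc⟩ := hdiff.nonempty
  obtain ⟨z, x₀, hzS, hx₀S, hedge⟩ :=
    exists_boundary_edge hc.1 (show z₀ ∈ {x | u x ≠ 0} from hz₀) hc.2
  have hzne : u z ≠ 0 := hzS
  have hux₀ : u x₀ = 0 := by
    by_contra h; exact hx₀S h
  set S₀ : Finset X := hufin.toFinset with hS₀
  set T : Finset X :=
    ((S₀ ∪ S₀.biUnion (fun x => Nfin b hlf x)) ∪ {x₀}) ∪ Nfin b hlf x₀ with hT
  have hmemS₀ : ∀ {x : X}, u x ≠ 0 → x ∈ S₀ := fun {x} hx => by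
    rw [hS₀, Set.Finite.mem_toFinset]; exact hx
  have hT1 : ∀ x, u x ≠ 0 → x ∈ T := fun x hx => by
    rw [hT]
    exact Finset.mem_union_left _ (Finset.mem_union_left _
      (Finset.mem_union_left _ (hmemS₀ hx)))
  have hT2 : ∀ x y, u x ≠ 0 → b x y ≠ 0 → y ∈ T := fun x y hx hb => by
    rw [hT]
    refine Finset.mem_union_left _ (Finset.mem_union_left _ (Finset.mem_union_right _ ?_))
    exact Finset.mem_biUnion.mpr ⟨x, hmemS₀ hx, (mem_Nfin b).mpr hb⟩
  have hx₀T : x₀ ∈ T := by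
    rw [hT]
    exact Finset.mem_union_left _ (Finset.mem_union_right _ (Finset.mem_singleton_self x₀))
  have hNx₀T : ∀ y, b x₀ y ≠ 0 → y ∈ T := fun y hb => by
    rw [hT]
    exact Finset.mem_union_right _ ((mem_Nfin b).mpr hb)
  have hzT : z ∈ T := hT1 z hzne
  set w : X → ℝ := fun x => |u x| with hw
  have hwu : ∀ x, w x ≠ 0 ↔ u x ≠ 0 := fun x => by rw [hw]; exact abs_ne_zero
  have hwT1 : ∀ x, w x ≠ 0 → x ∈ T := fun x hx => hT1 x ((hwu x).mp hx)
  have hwT2 : ∀ x y, w x ≠ 0 → b x y ≠ 0 → y ∈ T := fun x y hx hb =>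
    hT2 x y ((hwu x).mp hx) hb
  have hwfin : {x | w x ≠ 0}.Finite :=
    hufin.subset (fun x hx => (hwu x).mp hx)
  have hw0 : w x₀ = 0 := by rw [hw]; simpa using hux₀
  have hGreen : Qf b V T u = 0 := by
    rw [← sum_mul_Lr b V hsym hlf T u hT1 hT2]
    exact Finset.sum_eq_zero fun x _ => by rw [hLru x, mul_zero]
  obtain ⟨P, hPnn, hPQf⟩ :
      ∃ P : X → ℝ, (∀ f : X → ℂ, {x | f x ≠ 0}.Finite → 0 ≤ qForm b P f)
        ∧ Qf b P T w = 0 := by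
    rcases hq with hq | hq
    · refine ⟨V, hq, ?_⟩
      have hle : Qf b V T w ≤ Qf b V T u := by
        unfold Qf
        refine add_le_add ?_ ?_
        · apply mul_le_mul_of_nonneg_left ?_ (by norm_num : (0:ℝ) ≤ 1/2)
          refine Finset.sum_le_sum fun x _ => Finset.sum_le_sum fun y _ => ?_
          refine mul_le_mul_of_nonneg_left ?_ (hbnn x y)
          have habs : |w x - w y| ≤ |u x - u y| := by
            rw [hw]; exact abs_abs_sub_abs_le_abs_sub _ _
          calc (w x - w y)^2 = |w x - w y|^2 := (sq_abs _).symm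
            _ ≤ |u x - u y|^2 := by
                exact pow_le_pow_left₀ (abs_nonneg _) habs 2
            _ = (u x - u y)^2 := sq_abs _
        · apply le_of_eq
          exact Finset.sum_congr rfl fun x _ => by rw [hw]; simp [sq_abs]
      have hge : 0 ≤ Qf b V T w := by
        rw [← qForm_eq_Qf b hsym hlf V T w hwT1 hwT2]
        refine hq _ (hwfin.subset ?_)
        intro x hx
        simp only [Set.mem_setOf_eq, ne_eq, Complex.ofReal_eq_zero] at hx ⊢
        exact hx
      linarith
    · refine ⟨fun x => -V x - 2 * degree b x, hq, ?_⟩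
      have hQfw := Qf_neg_potential b V hsym hlf T w hwT2
      have hVw : ∑ x ∈ T, V x * w x^2 = ∑ x ∈ T, V x * u x^2 :=
        Finset.sum_congr rfl fun x _ => by rw [hw]; simp [sq_abs]
      have hcmp : ∑ x ∈ T, ∑ y ∈ T, b x y * (u x - u y)^2
          ≤ ∑ x ∈ T, ∑ y ∈ T, b x y * (w x + w y)^2 := by
        refine Finset.sum_le_sum fun x _ => Finset.sum_le_sum fun y _ => ?_
        refine mul_le_mul_of_nonneg_left ?_ (hbnn x y)
        have h1 : |u x - u y| ≤ w x + w y := by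
          rw [hw]; exact abs_sub (u x) (u y)
        have h2 : (0:ℝ) ≤ w x + w y := by
          rw [hw]; positivity
        calc (u x - u y)^2 = |u x - u y|^2 := (sq_abs _).symm
          _ ≤ (w x + w y)^2 := by exact pow_le_pow_left₀ (abs_nonneg _) h1 2
      have hge : 0 ≤ Qf b (fun x => -V x - 2 * degree b x) T w := by
        rw [← qForm_eq_Qf b hsym hlf (fun x => -V x - 2 * degree b x) T w hwT1 hwT2]
        refine hq _ (hwfin.subset ?_)
        intro x hx
        simp only [Set.mem_setOf_eq, ne_eq, Complex.ofReal_eq_zero] at hx ⊢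
        exact hx
      unfold Qf at hGreen
      linarith [hQfw, hVw, hcmp, hge, hGreen]
  have hpert : ∀ t : ℝ, 0 ≤ 2 * t * (Bf b P T w (fun y => if y = x₀ then 1 else 0))
      + t^2 * (Qf b P T (fun y => if y = x₀ then 1 else 0)) := by
    intro t
    have hfin2 : {x | (((fun x => w x + t * (if x = x₀ then (1:ℝ) else 0)) x : ℝ) : ℂ) ≠ 0}.Finite := by
      refine Set.Finite.subset (hwfin.union (Set.finite_singleton x₀)) ?_
      intro x hx
      simp only [Set.mem_setOf_eq, ne_eq, Complex.ofReal_eq_zero] at hx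
      by_cases hxx : x = x₀
      · exact Or.inr hxx
      · left
        simp only [Set.mem_setOf_eq]
        intro hwx
        apply hx
        rw [hwx, if_neg hxx]
        ring
    have h0 := hPnn _ hfin2
    have hc1 : ∀ x, w x + t * (if x = x₀ then (1:ℝ) else 0) ≠ 0 → x ∈ T := by
      intro x hx
      by_cases hxx : x = x₀
      · rw [hxx]; exact hx₀T
      · refine hwT1 x ?_
        intro hwx
        apply hx
        rw [hwx, if_neg hxx]; ring
    have hc2 : ∀ x y, w x + t * (if x = x₀ then (1:ℝ) else 0) ≠ 0 → b x y ≠ 0 → y ∈ T := by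
      intro x y hx hb
      by_cases hxx : x = x₀
      · exact hNx₀T y (by rwa [hxx] at hb)
      · refine hwT2 x y ?_ hb
        intro hwx
        apply hx
        rw [hwx, if_neg hxx]; ring
    rw [qForm_eq_Qf b hsym hlf P T (fun x => w x + t * (if x = x₀ then (1:ℝ) else 0)) hc1 hc2,
      Qf_expand b P T w (fun y => if y = x₀ then 1 else 0) t, hPQf] at h0
    linarith
  have hB0 : Bf b P T w (fun y => if y = x₀ then 1 else 0) = 0 :=
    eq_zero_of_quadratic_nonneg' hpert
  have hBval : Bf b P T w (fun y => if y = x₀ then 1 else 0) = -∑ y ∈ T, b x₀ y * w y :=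
    Bf_indicator b hsym P T w x₀ hx₀T hw0
  have hpos : 0 < ∑ y ∈ T, b x₀ y * w y := by
    have hterm : 0 < b x₀ z * w z := by
      apply mul_pos
      · rw [hsym]; exact hedge
      · rw [hw]
        exact abs_pos.mpr hzne
    refine lt_of_lt_of_le hterm (Finset.single_le_sum (f := fun y => b x₀ y * w y) (fun y _ => ?_) hzT)
    refine mul_nonneg (hbnn x₀ y) ?_
    rw [hw]
    exact abs_nonneg _
  rw [hBval] at hB0
  linarith

lemma key_complex (hb0 : ∀ x, b x x = 0) (hbnn : ∀ x y, 0 ≤ b x y)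
    (hsym : ∀ x y, b x y = b y x) (hlf : ∀ x, {y | b x y ≠ 0}.Finite)
    (hinfcomp : ∀ x, {y | Relation.ReflTransGen (fun u v => 0 < b u v) x y}.Infinite)
    (hq : (∀ f : X → ℂ, {x | f x ≠ 0}.Finite → 0 ≤ qForm b V f) ∨
      (∀ f : X → ℂ, {x | f x ≠ 0}.Finite →
        0 ≤ qForm b (fun x => -V x - 2 * degree b x) f))
    (p : X →₀ ℂ)
    (hp : ∀ x, (∑ y ∈ Nfin b hlf x, (b x y : ℂ) * (p x - p y)) + (V x : ℂ) * p x = 0) :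
    p = 0 := by
  have hre : ∀ x, Lr b V hlf (fun z => (p z).re) x = 0 := by
    intro x
    have h := congrArg Complex.re (hp x)
    simp only [Complex.add_re, Complex.re_sum, Complex.mul_re, Complex.ofReal_re,
      Complex.ofReal_im, Complex.sub_re, Complex.sub_im, Complex.zero_re, zero_mul, mul_zero,
      sub_zero, zero_add, add_zero] at h
    exact h
  have him : ∀ x, Lr b V hlf (fun z => (p z).im) x = 0 := by
    intro x
    have h := congrArg Complex.im (hp x)
    simp only [Complex.add_im, Complex.im_sum, Complex.mul_im, Complex.ofReal_re,
      Complex.ofReal_im, Complex.sub_re, Complex.sub_im, Complex.zero_im, zero_mul, mul_zero,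
      sub_zero, zero_add, add_zero] at h
    exact h
  have hfin : (↑p.support : Set X).Finite := p.support.finite_toSet
  have hfre : {x | (fun z => (p z).re) x ≠ 0}.Finite := by
    refine hfin.subset ?_
    intro x hx
    simp only [Set.mem_setOf_eq] at hx
    simp only [Finset.coe_sort_coe, Finset.mem_coe, Finsupp.mem_support_iff]
    intro h0
    exact hx (by rw [h0]; simp)
  have hfim : {x | (fun z => (p z).im) x ≠ 0}.Finite := by
    refine hfin.subset ?_
    intro x hx
    simp only [Set.mem_setOf_eq] at hx
    simp only [Finset.coe_sort_coe, Finset.mem_coe, Finsupp.mem_support_iff]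
    intro h0
    exact hx (by rw [h0]; simp)
  have hzre := key b V hb0 hbnn hsym hlf hinfcomp hq _ hfre hre
  have hzim := key b V hb0 hbnn hsym hlf hinfcomp hq _ hfim him
  ext x
  have h1 := hzre x
  have h2 := hzim x
  apply Complex.ext
  · simpa using h1
  · simpa using h2
end SchroedingerAux


open SchroedingerAux in
/-- **Surjectivity of discrete Schrödinger operators.**
Let `(X,b)` be a locally finite weighted graph all of whose connected components are infinite
and let `V : X → ℝ` be a potential such that the quadratic form `q_V` is nonnegative on
`C_c(X)` or the quadratic form `q_{-V-2deg}` is nonnegative on `C_c(X)`.  Then the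
Schrödinger operator `L_V f x = ∑_y b(x,y)(f x - f y) + V x · f x` is surjective on `C(X)`. -/
theorem schroedinger_surjective
    {X : Type*} [Countable X]
    (b : X → X → ℝ)
    (hb0 : ∀ x, b x x = 0)
    (hbnn : ∀ x y, 0 ≤ b x y)
    (hsym : ∀ x y, b x y = b y x)
    (hlf : ∀ x, {y | b x y ≠ 0}.Finite)
    (hinfcomp : ∀ x, {y | Relation.ReflTransGen (fun u v => 0 < b u v) x y}.Infinite)
    (V : X → ℝ)
    (hq : (∀ f : X → ℂ, {x | f x ≠ 0}.Finite → 0 ≤ qForm b V f) ∨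
      (∀ f : X → ℂ, {x | f x ≠ 0}.Finite →
        0 ≤ qForm b (fun x => -V x - 2 * degree b x) f)) :
    Function.Surjective (fun (f : X → ℂ) (x : X) =>
      (∑ᶠ y, (b x y : ℂ) * (f x - f y)) + (V x : ℂ) * f x) := by
  classical
  intro g
  set L : (X →₀ ℂ) →ₗ[ℂ] (X → ℂ) :=
    { toFun := fun p x =>
        (∑ y ∈ Nfin b hlf x, (b x y : ℂ) * (p x - p y)) + (V x : ℂ) * p x
      map_add' := by
        intro p q
        funext x
        simp only [Finsupp.coe_add, Pi.add_apply]
        have he : ∀ y ∈ Nfin b hlf x, (b x y : ℂ) * ((p x + q x) - (p y + q y))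
            = (b x y : ℂ) * (p x - p y) + (b x y : ℂ) * (q x - q y) := fun y _ => by ring
        rw [Finset.sum_congr rfl he, Finset.sum_add_distrib]
        ring
      map_smul' := by
        intro c p
        funext x
        simp only [Finsupp.coe_smul, Pi.smul_apply, smul_eq_mul, RingHom.id_apply]
        have he : ∀ y ∈ Nfin b hlf x, (b x y : ℂ) * (c * p x - c * p y)
            = c * ((b x y : ℂ) * (p x - p y)) := fun y _ => by ring
        rw [Finset.sum_congr rfl he, ← Finset.mul_sum]
        ring } with hLdef
  have hLapp : ∀ (p : X →₀ ℂ) (x : X),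
      L p x = (∑ y ∈ Nfin b hlf x, (b x y : ℂ) * (p x - p y)) + (V x : ℂ) * p x :=
    fun p x => rfl
  have hinj : Function.Injective L := by
    rw [injective_iff_map_eq_zero]
    intro p hp
    refine key_complex b V hb0 hbnn hsym hlf hinfcomp hq p (fun x => ?_)
    have := congrFun hp x
    rw [hLapp] at this
    simpa using this
  set W := LinearMap.range L with hW
  set e := LinearEquiv.ofInjective L hinj with he
  set φ₀ : W →ₗ[ℂ] ℂ := (Finsupp.linearCombination ℂ g).comp e.symm.toLinearMap with hφ
  obtain ⟨F, hF⟩ := LinearMap.exists_extend φ₀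
  set f : X → ℂ := fun y => F (Pi.single y 1) with hf
  have hFT : ∀ p : X →₀ ℂ, F (L p) = Finsupp.linearCombination ℂ g p := by
    intro p
    have h1 : (W.subtype) (e p) = L p := by
      simp [he, hW]
    calc F (L p) = F (W.subtype (e p)) := by rw [h1]
      _ = φ₀ (e p) := by rw [← hF]; rfl
      _ = Finsupp.linearCombination ℂ g (e.symm (e p)) := rfl
      _ = Finsupp.linearCombination ℂ g p := by rw [LinearEquiv.symm_apply_apply]
  have hFs : ∀ (q : X → ℂ) (s : Finset X), (∀ x ∉ s, q x = 0) →
      F q = ∑ x ∈ s, q x * f x := by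
    intro q s hs
    have hq_eq : q = ∑ x ∈ s, q x • (Pi.single x (1:ℂ) : X → ℂ) := by
      funext z
      rw [Finset.sum_apply]
      simp only [Pi.smul_apply, Pi.single_apply, smul_eq_mul, mul_ite, mul_one, mul_zero]
      rw [Finset.sum_ite_eq s z q]
      by_cases hz : z ∈ s
      · rw [if_pos hz]
      · rw [if_neg hz]; exact hs z hz
    calc F q = F (∑ x ∈ s, q x • (Pi.single x (1:ℂ) : X → ℂ)) := by rw [← hq_eq]
      _ = ∑ x ∈ s, q x • F (Pi.single x 1) := by
          rw [map_sum]
          exact Finset.sum_congr rfl fun x _ => by rw [map_smul]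
      _ = ∑ x ∈ s, q x * f x := by
          exact Finset.sum_congr rfl fun x _ => by rw [hf, smul_eq_mul]
  refine ⟨f, ?_⟩
  funext x
  show (∑ᶠ y, (b x y : ℂ) * (f x - f y)) + (V x : ℂ) * f x = g x
  have hsupp : (Function.support fun y => (b x y : ℂ) * (f x - f y))
      ⊆ ↑(Nfin b hlf x) := by
    intro y hy
    simp only [Function.mem_support] at hy
    have hb : (b x y : ℂ) ≠ 0 := fun h => hy (by rw [h, zero_mul])
    exact Finset.mem_coe.mpr ((mem_Nfin b).mpr (by exact_mod_cast hb))
  rw [finsum_eq_sum_of_support_subset _ hsupp]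
  set δ : X →₀ ℂ := Finsupp.single x 1 with hδ
  have hxN : x ∉ Nfin b hlf x := by
    rw [mem_Nfin b]
    simp [hb0 x]
  have hδx : δ x = 1 := Finsupp.single_eq_same
  have hδsupp : ∀ y ∉ insert x (Nfin b hlf x), L δ y = 0 := by
    intro y hy
    have hyx : y ≠ x := fun h => hy (by rw [h]; exact Finset.mem_insert_self _ _)
    have hyN : y ∉ Nfin b hlf x := fun h => hy (Finset.mem_insert_of_mem h)
    have hbxy : b x y = 0 := by
      by_contra h; exact hyN ((mem_Nfin b).mpr h)
    rw [hLapp]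
    have hδy : δ y = 0 := Finsupp.single_eq_of_ne' (Ne.symm hyx)
    have hterm : ∀ z ∈ Nfin b hlf y, (b y z : ℂ) * (δ y - δ z)
        = if x = z then -(b y z : ℂ) else 0 := by
      intro z hz
      rw [hδy]
      by_cases hzx : x = z
      · rw [if_pos hzx, ← hzx, hδx]; ring
      · rw [if_neg hzx, Finsupp.single_eq_of_ne' hzx]; ring
    rw [Finset.sum_congr rfl hterm, Finset.sum_ite_eq _ x _, hδy, mul_zero, add_zero]
    by_cases hxNy : x ∈ Nfin b hlf y
    · rw [if_pos hxNy, hsym y x, hbxy]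
      simp
    · rw [if_neg hxNy]
  have h2 := hFs (L δ) (insert x (Nfin b hlf x)) hδsupp
  have h3 : F (L δ) = g x := by
    rw [hFT, hδ, Finsupp.linearCombination_single, one_smul]
  have hLδx : L δ x = (∑ z ∈ Nfin b hlf x, (b x z : ℂ)) + (V x : ℂ) := by
    rw [hLapp]
    have hterm : ∀ z ∈ Nfin b hlf x, (b x z : ℂ) * (δ x - δ z) = (b x z : ℂ) := by
      intro z hz
      have hzx : z ≠ x := fun h => hxN (h ▸ hz)
      rw [hδx, Finsupp.single_eq_of_ne' (Ne.symm hzx)]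
      ring
    rw [Finset.sum_congr rfl hterm, hδx, mul_one]
  have hLδy : ∀ y ∈ Nfin b hlf x, L δ y = -(b x y : ℂ) := by
    intro y hy
    have hyx : y ≠ x := fun h => hxN (h ▸ hy)
    rw [hLapp]
    have hδy : δ y = 0 := Finsupp.single_eq_of_ne' (Ne.symm hyx)
    have hxy : b x y ≠ 0 := (mem_Nfin b).mp hy
    have hxNy : x ∈ Nfin b hlf y := (mem_Nfin b).mpr (by rw [← hsym]; exact hxy)
    have hterm : ∀ z ∈ Nfin b hlf y, (b y z : ℂ) * (δ y - δ z)
        = if x = z then -(b y z : ℂ) else 0 := by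
      intro z hz
      rw [hδy]
      by_cases hzx : x = z
      · rw [if_pos hzx, ← hzx, hδx]; ring
      · rw [if_neg hzx, Finsupp.single_eq_of_ne' hzx]; ring
    rw [Finset.sum_congr rfl hterm, Finset.sum_ite_eq _ x _, if_pos hxNy, hδy, mul_zero,
      add_zero, hsym y x]
  have hsum : ∑ y ∈ insert x (Nfin b hlf x), L δ y * f y
      = (∑ y ∈ Nfin b hlf x, (b x y : ℂ) * (f x - f y)) + (V x : ℂ) * f x := by
    rw [Finset.sum_insert hxN, hLδx,
      Finset.sum_congr rfl (fun y hy => by rw [hLδy y hy] :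
        ∀ y ∈ Nfin b hlf x, L δ y * f y = -(b x y : ℂ) * f y)]
    have hAC : (∑ z ∈ Nfin b hlf x, (b x z : ℂ) * f x)
        + (∑ y ∈ Nfin b hlf x, -(b x y : ℂ) * f y)
        = ∑ y ∈ Nfin b hlf x, (b x y : ℂ) * (f x - f y) := by
      rw [← Finset.sum_add_distrib]
      exact Finset.sum_congr rfl fun y _ => by ring
    have hmul : (∑ z ∈ Nfin b hlf x, (b x z : ℂ)) * f x
        = ∑ z ∈ Nfin b hlf x, (b x z : ℂ) * f x := by rw [Finset.sum_mul]
    linear_combination hAC + hmul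
  rw [← hsum, ← h2, h3]
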